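/- Let d be even and define the shift vectors v^{(j)} = (j/(d+1), ..., j/(d+1)) ∈ ℝ^d for j = 0, 1, ..., d. Then for any point p ∈ ℝ^d and any r = 2^{-ℓ} with ℓ ∈ ℕ, there exists j ∈ {0, 1, ..., d} such that p + v^{(j)} is (1/(2d+2))-central in its r-grid cell. -/

import Mathlib

/-- The real-valued remainder of `x` modulo `r`, in `[0, r)` for `r > 0`. -/
noncomputable def rmod (x r : ℝ) : ℝ := x - r * ⌊x / r⌋

private lemma floor_diff_key (N : ℕ) (hN : 0 < N) (z : ℝ) (k k' : ℕ) :
    ∃ t : ℤ, ((k : ℝ) - k' + N * t)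
      = N * (Int.fract (z + k / N) - Int.fract (z + k' / N)) := by
  refine ⟨⌊z + (k' : ℝ) / N⌋ - ⌊z + (k : ℝ) / N⌋, ?_⟩
  have hN0 : (N : ℝ) ≠ 0 := by positivity
  simp only [Int.fract]
  push_cast
  field_simp
  ring

private lemma mixed_absurd (N : ℕ) (hN : 0 < N) (z : ℝ) (k k' : ℕ)
    (h1 : Int.fract (z + k / N) < 1 / (2 * N))
    (h2 : 1 - 1 / (2 * N) ≤ Int.fract (z + k' / N)) : False := by
  obtain ⟨t, ht⟩ := floor_diff_key N hN z k k'
  have hNR : (0 : ℝ) < N := by exact_mod_cast hN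
  have ha : 0 ≤ Int.fract (z + (k : ℝ) / N) := Int.fract_nonneg _
  have hb : Int.fract (z + (k' : ℝ) / N) < 1 := Int.fract_lt_one _
  set a := Int.fract (z + (k : ℝ) / N)
  set b := Int.fract (z + (k' : ℝ) / N)
  have h1' : a * (2 * N) < 1 := by
    have := (lt_div_iff₀ (by positivity : (0:ℝ) < 2 * N)).mp h1
    linarith
  have h2' : (1 - b) * (2 * N) ≤ 1 := by
    have hb' : 1 - b ≤ 1 / (2 * N) := by linarith
    have := (le_div_iff₀ (by positivity : (0:ℝ) < 2 * N)).mp hb'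
    linarith
  have hm1 : (k : ℝ) - k' + N * t < 1 - N := by
    rw [ht]; nlinarith
  have hm2 : (-(N:ℝ)) < (k : ℝ) - k' + N * t := by
    rw [ht]; nlinarith
  have h1'' : (k : ℤ) - k' + N * t < 1 - N := by exact_mod_cast hm1
  have h2'' : (-(N:ℤ)) < (k : ℤ) - k' + N * t := by exact_mod_cast hm2
  omega

private lemma close_eq (N : ℕ) (hN : 0 < N) (z : ℝ) {k k' : ℕ} (hk : k < N) (hk' : k' < N)
    (hab : |Int.fract (z + k / N) - Int.fract (z + k' / N)| < 1 / N) : k = k' := by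
  obtain ⟨t, ht⟩ := floor_diff_key N hN z k k'
  have hNR : (0 : ℝ) < N := by exact_mod_cast hN
  have habs : |(k : ℝ) - k' + N * t| < 1 := by
    rw [ht, abs_mul, abs_of_pos hNR]
    calc (N:ℝ) * |Int.fract (z + k / N) - Int.fract (z + k' / N)|
        < N * (1 / N) := by exact mul_lt_mul_of_pos_left hab hNR
      _ = 1 := by field_simp
  have habs' : |(k : ℤ) - k' + N * t| < 1 := by
    rw [abs_lt] at habs ⊢
    constructor <;> [exact_mod_cast habs.1; exact_mod_cast habs.2]
  have hzero : (k : ℤ) - k' + N * t = 0 := by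
    rw [abs_lt] at habs'; omega
  have hdvd : (N : ℤ) ∣ ((k : ℤ) - k') := ⟨-t, by linarith⟩
  have hklt : (k : ℤ) < N := by exact_mod_cast hk
  have hklt' : (k' : ℤ) < N := by exact_mod_cast hk'
  have : (k : ℤ) - k' = 0 := by
    refine Int.eq_zero_of_abs_lt_dvd hdvd ?_
    rw [abs_lt]
    constructor <;> omega
  omega

private lemma bad_unique (N : ℕ) (hN : 0 < N) (z : ℝ) {k k' : ℕ} (hk : k < N) (hk' : k' < N)
    (h1 : Int.fract (z + k / N) < 1 / (2 * N) ∨ 1 - 1 / (2 * N) ≤ Int.fract (z + k / N))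
    (h2 : Int.fract (z + k' / N) < 1 / (2 * N) ∨ 1 - 1 / (2 * N) ≤ Int.fract (z + k' / N)) :
    k = k' := by
  have hNR : (0 : ℝ) < N := by exact_mod_cast hN
  have ha0 : 0 ≤ Int.fract (z + (k : ℝ) / N) := Int.fract_nonneg _
  have ha1 : Int.fract (z + (k : ℝ) / N) < 1 := Int.fract_lt_one _
  have hb0 : 0 ≤ Int.fract (z + (k' : ℝ) / N) := Int.fract_nonneg _
  have hb1 : Int.fract (z + (k' : ℝ) / N) < 1 := Int.fract_lt_one _
  have h2N : 1 / (2 * (N:ℝ)) ≤ 1 / N := by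
    apply one_div_le_one_div_of_le hNR
    linarith
  rcases h1 with h1 | h1 <;> rcases h2 with h2 | h2
  · exact close_eq N hN z hk hk' (by rw [abs_lt]; constructor <;> linarith)
  · exact absurd (mixed_absurd N hN z k k' h1 h2) (fun h => h)
  · exact absurd (mixed_absurd N hN z k' k h2 h1) (fun h => h)
  · exact close_eq N hN z hk hk' (by rw [abs_lt]; constructor <;> linarith)

/-- Chan's shifting lemma: for even `d`, any `p ∈ ℝ^d` and any `r = 2^{-ℓ}`, some
shift `v⁽ʲ⁾ = (j/(d+1),…,j/(d+1))`, `0 ≤ j ≤ d`, makes `p + v⁽ʲ⁾`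
`(1/(2d+2))`-central in its `r`-grid cell. -/
theorem stmt5 (d : ℕ) (hd : Even d) (p : Fin d → ℝ) (ℓ : ℕ) :
    ∃ j ≤ d, ∀ i : Fin d,
      (1 / (2 * (d:ℝ) + 2)) * (1/2 : ℝ) ^ ℓ ≤
          rmod (p i + (j:ℝ) / ((d:ℝ) + 1)) ((1/2 : ℝ) ^ ℓ) ∧
        rmod (p i + (j:ℝ) / ((d:ℝ) + 1)) ((1/2 : ℝ) ^ ℓ) <
          (1 - 1 / (2 * (d:ℝ) + 2)) * (1/2 : ℝ) ^ ℓ := by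
  classical
  set N : ℕ := d + 1 with hNdef
  have hN : 0 < N := Nat.succ_pos d
  have hNR : (0 : ℝ) < N := by exact_mod_cast hN
  set r : ℝ := (1/2 : ℝ) ^ ℓ with hrdef
  have hr0 : (0 : ℝ) < r := by positivity
  set y : Fin d → ℝ := fun i => p i * 2 ^ ℓ with hy
  -- bad residues
  set B : Fin d → Finset ℕ := fun i => (Finset.range N).filter
    (fun k => Int.fract (y i + k / N) < 1 / (2 * N)
      ∨ 1 - 1 / (2 * N) ≤ Int.fract (y i + k / N)) with hB
  have hBcard : ∀ i, (B i).card ≤ 1 := by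
    intro i
    apply Finset.card_le_one.mpr
    intro k hk k' hk'
    rw [hB, Finset.mem_filter, Finset.mem_range] at hk hk'
    exact bad_unique N hN (y i) hk.1 hk'.1 hk.2 hk'.2
  have hcard : (Finset.univ.biUnion B).card ≤ d := by
    calc (Finset.univ.biUnion B).card ≤ ∑ i : Fin d, (B i).card :=
          Finset.card_biUnion_le
      _ ≤ ∑ _i : Fin d, 1 := Finset.sum_le_sum fun i _ => hBcard i
      _ = d := by simp
  have hex : ∃ k ∈ Finset.range N, k ∉ Finset.univ.biUnion B := by
    by_contra h
    push_neg at h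
    have hsub : Finset.range N ⊆ Finset.univ.biUnion B := h
    have := Finset.card_le_card hsub
    rw [Finset.card_range] at this
    omega
  obtain ⟨k, hkN, hkgood⟩ := hex
  rw [Finset.mem_range] at hkN
  have hgood : ∀ i : Fin d,
      1 / (2 * (N:ℝ)) ≤ Int.fract (y i + k / N)
        ∧ Int.fract (y i + k / N) < 1 - 1 / (2 * N) := by
    intro i
    by_contra hcon
    apply hkgood
    refine Finset.mem_biUnion.mpr ⟨i, Finset.mem_univ i, ?_⟩
    rw [hB, Finset.mem_filter, Finset.mem_range]
    refine ⟨hkN, ?_⟩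
    by_contra hbad
    push_neg at hbad
    exact hcon ⟨hbad.1, hbad.2⟩
  -- pick j with j * 2^ℓ ≡ k [MOD N]
  have hodd : Odd N := Even.add_one hd
  have hcop : Nat.Coprime (2 ^ ℓ) N :=
    Nat.Coprime.pow_left ℓ (Nat.coprime_two_left.mpr hodd)
  haveI : NeZero N := ⟨hN.ne'⟩
  set w : (ZMod N)ˣ := ZMod.unitOfCoprime (2 ^ ℓ) hcop with hw
  set j : ℕ := (((w⁻¹ : (ZMod N)ˣ) : ZMod N) * (k : ZMod N)).val with hj
  have hjlt : j < N := ZMod.val_lt _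
  refine ⟨j, by omega, ?_⟩
  have hmod : (j * 2 ^ ℓ) % N = k := by
    have hz : ((j * 2 ^ ℓ : ℕ) : ZMod N) = (k : ZMod N) := by
      push_cast
      rw [hj, ZMod.natCast_val, ZMod.cast_id]
      have h2 : ((2 : ZMod N) ^ ℓ) = (w : ZMod N) := by
        rw [hw, ZMod.coe_unitOfCoprime]; push_cast; ring
      rw [h2, mul_right_comm, Units.inv_mul, one_mul]
    have := (ZMod.natCast_eq_natCast_iff _ _ _).mp hz
    have h' : (j * 2 ^ ℓ) % N = k % N := this
    rwa [Nat.mod_eq_of_lt hkN] at h'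
  -- bridge: fract of shifted point
  have hrmod : ∀ x : ℝ, rmod x r = r * Int.fract (x / r) := by
    intro x
    simp only [rmod, Int.fract]
    rw [mul_sub, mul_div_cancel₀ _ hr0.ne']
  have hfract : ∀ i : Fin d,
      Int.fract ((p i + (j : ℝ) / ((d : ℝ) + 1)) / r) = Int.fract (y i + (k : ℝ) / N) := by
    intro i
    have hdiv : j * 2 ^ ℓ = N * (j * 2 ^ ℓ / N) + k := by
      conv_lhs => rw [← Nat.div_add_mod (j * 2 ^ ℓ) N]
      rw [hmod]
    set q : ℕ := j * 2 ^ ℓ / N with hq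
    have hqR : (j : ℝ) * 2 ^ ℓ = N * q + k := by exact_mod_cast hdiv
    have hdN : ((d : ℝ) + 1) = (N : ℝ) := by rw [hNdef]; push_cast; ring
    have hrinv : r⁻¹ = (2 : ℝ) ^ ℓ := by rw [hrdef, one_div, inv_pow, inv_inv]
    have hexp : (p i + (j : ℝ) / ((d : ℝ) + 1)) / r = (y i + (k : ℝ) / N) + q := by
      rw [div_eq_mul_inv, hrinv, hdN]
      simp only [hy]
      field_simp
      linear_combination hqR
    rw [hexp, Int.fract_add_natCast]
  have hcoef : 2 * (d : ℝ) + 2 = 2 * N := by rw [hNdef]; push_cast; ring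
  intro i
  obtain ⟨hg1, hg2⟩ := hgood i
  rw [hrmod, hfract i, hcoef]
  constructor
  · rw [mul_comm]
    exact mul_le_mul_of_nonneg_left hg1 hr0.le
  · calc r * Int.fract (y i + (k : ℝ) / N) < r * (1 - 1 / (2 * N)) :=
        mul_lt_mul_of_pos_left hg2 hr0
    _ = (1 - 1 / (2 * (N:ℝ))) * r := by ring
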